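/- If y ≥ u and y ≥ v in the Young–Fibonacci order, then y ≥ o(u,v), where o(u,v) is defined as follows: write u = u'w, v = v'w with w the longest common suffix, assume WLOG #u ≥ #v (number of digits), and let o(u,v) be obtained from u by replacing the first max(#v' − d(u'), 0) ones of u by twos (d denotes the number of 2's). In particular, o(u,v) is the least upper bound of u and v. -/

import Mathlib

inductive YFDigit : Type
  | one : YFDigit
  | two : YFDigit
  deriving DecidableEq, Repr

abbrev YFWord := List YFDigit

namespace YFWord

/-- value of a digit -/
def digitVal : YFDigit → ℕ
  | .one => 1
  | .two => 2

/-- digit sum of a word -/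
def dsum (v : YFWord) : ℕ := (v.map digitVal).sum

/-- number of 2's in a word -/
def twos (v : YFWord) : ℕ := v.count YFDigit.two

/-- longest common prefix of two lists -/
def commonPrefix : YFWord → YFWord → YFWord
  | a :: x, b :: y => if a = b then a :: commonPrefix x y else []
  | _, _ => []

/-- longest common suffix -/
def lcs (x y : YFWord) : YFWord := (commonPrefix x.reverse y.reverse).reverse

/-- the prefix of `x` remaining after deleting the longest common suffix of `x` and `y` -/
def rem (x y : YFWord) : YFWord := x.take (x.length - (lcs x y).length)

/-- the Young–Fibonacci order: x ≤ y iff, after removing the longest common suffix,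
the remaining prefix of `y` has at least as many 2's as the remaining prefix of `x` has digits -/
def yfLE (x y : YFWord) : Prop := (rem x y).length ≤ twos (rem y x)

/-- strict Young–Fibonacci order -/
def yfLT (x y : YFWord) : Prop := yfLE x y ∧ ¬ yfLE y x

/-- `y` covers `x` in the Young–Fibonacci order -/
def covers (x y : YFWord) : Prop := yfLT x y ∧ ∀ z, ¬ (yfLT x z ∧ yfLT z y)

end YFWord

open YFWord

namespace YFWord

/-- replace the first `k` ones of a word by twos -/
def repl : ℕ → YFWord → YFWord
  | 0, l => l
  | _ + 1, [] => []
  | k + 1, YFDigit.two :: l => YFDigit.two :: repl (k + 1) l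
  | k + 1, YFDigit.one :: l => YFDigit.two :: repl k l

/-- the word `o(u,v)`: assuming WLOG `#u ≥ #v`, obtained from `u` by replacing its first
`max(#v' − d(u'), 0)` ones by twos, where `u = u'w`, `v = v'w`, `w` the longest common suffix -/
def joinWord (u v : YFWord) : YFWord :=
  if v.length ≤ u.length then repl ((rem v u).length - twos (rem u v)) u
  else repl ((rem u v).length - twos (rem v u)) v

end YFWord


namespace YFWord

/-! ### infrastructure -/

lemma commonPrefix_prefix_left : ∀ x y : YFWord, commonPrefix x y <+: x
  | [], _ => by simp [commonPrefix]
  | a :: x, [] => by simp [commonPrefix]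
  | a :: x, b :: y => by
    by_cases h : a = b
    · obtain ⟨t, ht⟩ := commonPrefix_prefix_left x y
      exact ⟨t, by simp [commonPrefix, h, ht]⟩
    · simp [commonPrefix, h]

lemma commonPrefix_prefix_right : ∀ x y : YFWord, commonPrefix x y <+: y
  | [], _ => by simp [commonPrefix]
  | a :: x, [] => by simp [commonPrefix]
  | a :: x, b :: y => by
    by_cases h : a = b
    · subst h
      obtain ⟨t, ht⟩ := commonPrefix_prefix_right x y
      exact ⟨t, by simp [commonPrefix, ht]⟩
    · simp [commonPrefix, h]

lemma commonPrefix_max : ∀ p x y : YFWord, p <+: x → p <+: y →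
    p.length ≤ (commonPrefix x y).length
  | [], _, _, _, _ => by simp
  | a :: p, x, y, hx, hy => by
    obtain ⟨x', rfl⟩ := hx
    obtain ⟨y', rfl⟩ := hy
    have := commonPrefix_max p _ _ ⟨x', rfl⟩ ⟨y', rfl⟩
    simpa [commonPrefix] using this

lemma lcs_suffix_left (x y : YFWord) : lcs x y <:+ x := by
  simpa [lcs] using (commonPrefix_prefix_left x.reverse y.reverse).reverse

lemma lcs_suffix_right (x y : YFWord) : lcs x y <:+ y := by
  simpa [lcs] using (commonPrefix_prefix_right x.reverse y.reverse).reverse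

lemma lcs_max {t x y : YFWord} (hx : t <:+ x) (hy : t <:+ y) :
    t.length ≤ (lcs x y).length := by
  simpa [lcs] using commonPrefix_max t.reverse x.reverse y.reverse hx.reverse hy.reverse

lemma suffix_of_suffix_length_le {t c z : YFWord} (ht : t <:+ z) (hc : c <:+ z)
    (h : t.length ≤ c.length) : t <:+ c := by
  rw [← List.reverse_prefix] at ht hc ⊢
  exact List.prefix_of_prefix_length_le ht hc (by simpa)

lemma suffix_eq_of_length_eq {t c z : YFWord} (ht : t <:+ z) (hc : c <:+ z)
    (h : t.length = c.length) : t = c :=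
  (suffix_of_suffix_length_le ht hc h.le).eq_of_length h

lemma lcs_comm (x y : YFWord) : lcs y x = lcs x y :=
  suffix_eq_of_length_eq (lcs_suffix_left y x) (lcs_suffix_right x y)
    (le_antisymm (lcs_max (lcs_suffix_right y x) (lcs_suffix_left y x))
      (lcs_max (lcs_suffix_right x y) (lcs_suffix_left x y)))

lemma take_sub_append (f t z : YFWord) (h : z = f ++ t) :
    z.take (z.length - t.length) = f := by
  subst h; simp

lemma rem_append_lcs (x y : YFWord) : rem x y ++ lcs x y = x := by
  obtain ⟨f, hf⟩ := lcs_suffix_left x y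
  rw [rem, take_sub_append f (lcs x y) x hf.symm, hf]

lemma rem_eq_of_append {x y f : YFWord} (h : x = f ++ lcs x y) : rem x y = f := by
  rw [rem, take_sub_append f (lcs x y) x h]

lemma rem_length (x y : YFWord) :
    (rem x y).length + (lcs x y).length = x.length := by
  conv_rhs => rw [← rem_append_lcs x y]
  simp

lemma twos_append (a b : YFWord) : twos (a ++ b) = twos a + twos b :=
  List.count_append

lemma twos_le_length (a : YFWord) : twos a ≤ a.length := List.count_le_length

lemma twos_replicate (n : ℕ) : twos (List.replicate n YFDigit.two) = n := by
  simp [twos]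

/-- sufficient condition for `yfLE` from any common-suffix decomposition -/
lemma yfLE_of_decomp {x y x₀ y₀ t : YFWord} (hx : x = x₀ ++ t) (hy : y = y₀ ++ t)
    (h : x₀.length ≤ twos y₀) : yfLE x y := by
  have htx : t <:+ x := ⟨x₀, hx.symm⟩
  have hty : t <:+ y := ⟨y₀, hy.symm⟩
  have hlen : t.length ≤ (lcs x y).length := lcs_max htx hty
  obtain ⟨e, he⟩ := suffix_of_suffix_length_le htx (lcs_suffix_left x y) hlen
  have hx0 : x₀ = rem x y ++ e := by
    apply List.append_cancel_right (bs := t)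
    rw [← hx]
    conv_lhs => rw [← rem_append_lcs x y, ← he]
    rw [List.append_assoc]
  have hy0 : y₀ = rem y x ++ e := by
    apply List.append_cancel_right (bs := t)
    rw [← hy]
    conv_lhs => rw [← rem_append_lcs y x, lcs_comm, ← he]
    rw [List.append_assoc]
  rw [yfLE]
  have h1 : (rem x y).length + e.length = x₀.length := by rw [hx0]; simp
  have h2 : twos y₀ = twos (rem y x) + twos e := by rw [hy0, twos_append]
  have := twos_le_length e
  omega

lemma ones_add_twos : ∀ x : YFWord, x.count YFDigit.one + twos x = x.length
  | [] => rfl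
  | d :: x => by
    have := ones_add_twos x
    cases d <;> simp [twos, List.count_cons] at this ⊢ <;> omega

lemma repl_zero (l : YFWord) : repl 0 l = l := by simp [repl]

lemma repl_length : ∀ (k : ℕ) (x : YFWord), (repl k x).length = x.length
  | 0, x => by simp [repl]
  | k + 1, [] => by simp [repl]
  | k + 1, YFDigit.two :: x => by simp [repl, repl_length (k+1) x]
  | k + 1, YFDigit.one :: x => by simp [repl, repl_length k x]

lemma repl_append : ∀ (k : ℕ) (p q : YFWord), k ≤ p.count YFDigit.one →
    repl k (p ++ q) = repl k p ++ q
  | 0, p, q, _ => by simp [repl]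
  | k + 1, [], q, h => by simp at h
  | k + 1, YFDigit.two :: p, q, h => by
    have h' : k + 1 ≤ p.count YFDigit.one := by simpa [List.count_cons] using h
    simp [repl, repl_append (k+1) p q h']
  | k + 1, YFDigit.one :: p, q, h => by
    have h' : k ≤ p.count YFDigit.one := by simp [List.count_cons] at h; omega
    simp [repl, repl_append k p q h']

lemma repl_struct : ∀ (k : ℕ) (x : YFWord), k ≤ x.count YFDigit.one →
    ∃ p q : YFWord, x = p ++ q ∧
      repl k x = List.replicate p.length YFDigit.two ++ q ∧
      twos p + k = p.length
  | 0, x, _ => ⟨[], x, rfl, (repl_zero x).trans (by simp), rfl⟩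
  | k + 1, [], h => by simp at h
  | k + 1, YFDigit.two :: x, h => by
    have h' : k + 1 ≤ x.count YFDigit.one := by simpa [List.count_cons] using h
    obtain ⟨p, q, h1, h2, h3⟩ := repl_struct (k+1) x h'
    refine ⟨YFDigit.two :: p, q, by simp [h1], ?_, ?_⟩
    · simp [repl, h2, List.replicate_succ]
    · simp only [twos, List.count_cons] at h3 ⊢
      simp
      omega
  | k + 1, YFDigit.one :: x, h => by
    have h' : k ≤ x.count YFDigit.one := by simp [List.count_cons] at h; omega
    obtain ⟨p, q, h1, h2, h3⟩ := repl_struct k x h'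
    refine ⟨YFDigit.one :: p, q, by simp [h1], ?_, ?_⟩
    · simp [repl, h2, List.replicate_succ]
    · simp only [twos, List.count_cons] at h3 ⊢
      simp
      omega


lemma main_lemma (u v : YFWord) (hlen : v.length ≤ u.length) :
    (∀ y : YFWord, yfLE u y → yfLE v y →
        yfLE (repl ((rem v u).length - twos (rem u v)) u) y) ∧
    yfLE u (repl ((rem v u).length - twos (rem u v)) u) ∧
    yfLE v (repl ((rem v u).length - twos (rem u v)) u) := by
  obtain ⟨w, u', v', hw, hu', hv'⟩ :
      ∃ w u' v' : YFWord, w = lcs u v ∧ u' = rem u v ∧ v' = rem v u :=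
    ⟨_, _, _, rfl, rfl, rfl⟩
  have hu : u = u' ++ w := by rw [hu', hw, rem_append_lcs]
  have hv : v = v' ++ w := by
    rw [hv', hw, ← lcs_comm u v, rem_append_lcs]
  have hkdef : (rem v u).length - twos (rem u v) = v'.length - twos u' := by
    rw [hu', hv']
  rw [hkdef]
  rcases Nat.eq_zero_or_pos (v'.length - twos u') with hk0 | hkpos
  · rw [hk0, repl_zero]
    have hvle : v'.length ≤ twos u' := by omega
    exact ⟨fun y hy _ => hy,
      yfLE_of_decomp (x₀ := []) (y₀ := []) (t := u) rfl rfl (by simp),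
      yfLE_of_decomp hv hu hvle⟩
  · obtain ⟨k, hk⟩ : ∃ k, k = v'.length - twos u' := ⟨_, rfl⟩
    rw [← hk]
    have hkpos' : 0 < k := hk ▸ hkpos
    have hkeq : k + twos u' = v'.length := by omega
    have hlen' : v'.length ≤ u'.length := by
      have h1 : u'.length + w.length = u.length := by rw [hu]; simp
      have h2 : v'.length + w.length = v.length := by rw [hv]; simp
      omega
    have hones : k ≤ u'.count YFDigit.one := by
      have := ones_add_twos u'
      omega
    obtain ⟨p, q, hpq, hrepl, hptwos⟩ := repl_struct k u' hones
    have hju : repl k u = List.replicate p.length YFDigit.two ++ (q ++ w) := by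
      rw [hu, repl_append k u' w hones, hrepl, List.append_assoc]
    have hupqw : u = p ++ (q ++ w) := by rw [hu, hpq, List.append_assoc]
    have hqw : twos u' = twos p + twos q := by rw [hpq, twos_append]
    have hv'len : v'.length = p.length + twos q := by omega
    refine ⟨?_, ?_, ?_⟩
    · -- least upper bound
      intro y hyu hyv
      obtain ⟨s, a, hs, ha⟩ : ∃ s a : YFWord, s = lcs u y ∧ a = rem u y :=
        ⟨_, _, rfl, rfl⟩
      have hus : u = a ++ s := by rw [ha, hs, rem_append_lcs]
      have hys : y = rem y u ++ s := by rw [hs, ← lcs_comm u y, rem_append_lcs]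
      have hyu' : a.length ≤ twos (rem y u) := by rw [ha]; exact hyu
      rcases le_or_gt s.length (q ++ w).length with hcase | hcase
      · -- Case A
        have hsu : s <:+ u := hs ▸ lcs_suffix_left u y
        have hsqw : s <:+ q ++ w :=
          suffix_of_suffix_length_le hsu ⟨p, hupqw.symm⟩ hcase
        obtain ⟨x₁, hx₁⟩ := hsqw
        have hjdec : repl k u = (List.replicate p.length YFDigit.two ++ x₁) ++ s := by
          rw [hju, ← hx₁, List.append_assoc]
        have haeq : a = p ++ x₁ := by
          apply List.append_cancel_right (bs := s)
          rw [← hus, hupqw, ← hx₁, List.append_assoc]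
        refine yfLE_of_decomp hjdec hys ?_
        have h1 : a.length = p.length + x₁.length := by rw [haeq]; simp
        simp only [List.length_append, List.length_replicate]
        omega
      · -- Case B
        simp only [List.length_append] at hcase
        have hsu : s <:+ u := hs ▸ lcs_suffix_left u y
        have hsy : s <:+ y := hs ▸ lcs_suffix_right u y
        have hwu : w <:+ u := hw ▸ lcs_suffix_left u v
        have hwv : w <:+ v := hw ▸ lcs_suffix_right u v
        have hws : w <:+ s := suffix_of_suffix_length_le hwu hsu (by omega)
        have hwy : w <:+ y := hws.trans hsy
        obtain ⟨σ, hσ⟩ := hws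
        have hu'aσ : u' = a ++ σ := by
          apply List.append_cancel_right (bs := w)
          rw [← hu, hus, ← hσ, List.append_assoc]
        -- lcs v y = w
        have hlvy_ge : w.length ≤ (lcs v y).length := lcs_max hwv hwy
        have hlvy_le : (lcs v y).length ≤ w.length := by
          by_contra hcon
          push_neg at hcon
          obtain ⟨τ, hτ⟩ : ∃ τ : YFWord, τ = y.drop (y.length - (w.length + 1)) :=
            ⟨_, rfl⟩
          have hτy : τ <:+ y := hτ ▸ List.drop_suffix _ _
          have hylen : w.length + 1 ≤ y.length := by
            have := (lcs_suffix_right v y).length_le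
            omega
          have hτlen : τ.length = w.length + 1 := by
            rw [hτ, List.length_drop]; omega
          have hτv : τ <:+ v :=
            (suffix_of_suffix_length_le hτy (lcs_suffix_right v y)
              (by omega)).trans (lcs_suffix_left v y)
          have hτu : τ <:+ u := by
            refine (suffix_of_suffix_length_le hτy hsy ?_).trans hsu
            have hwlen : w.length ≤ w.length + σ.length := by omega
            have hslen : s.length = σ.length + w.length := by rw [← hσ]; simp
            omega
          have := lcs_max hτu hτv
          rw [← hw] at this
          omega
        have hlvyw : lcs v y = w :=
          suffix_eq_of_length_eq (lcs_suffix_left v y) hwv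
            (le_antisymm hlvy_le hlvy_ge)
        -- from yfLE v y
        have hremvy : rem v y = v' := by
          apply rem_eq_of_append
          rw [hlvyw, ← hv]
        have hremyv : rem y v = rem y u ++ σ := by
          apply rem_eq_of_append
          rw [lcs_comm, hlvyw]
          conv_lhs => rw [hys, ← hσ]
          rw [List.append_assoc]
        have hyv' : v'.length ≤ twos (rem y u) + twos σ := by
          have h0 := hyv
          rw [yfLE, hremvy, hremyv, twos_append] at h0
          exact h0
        have halen : a.length < p.length := by
          have h1 : a.length + s.length = u.length := by rw [hus]; simp
          have h2 : p.length + (q.length + w.length) = u.length := by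
            rw [hupqw]; simp
          omega
        have hap : a <+: p :=
          List.prefix_of_prefix_length_le ⟨s, hus.symm⟩ ⟨q ++ w, hupqw.symm⟩
            (le_of_lt halen)
        obtain ⟨c, hc⟩ := hap
        have hσcq : σ = c ++ q := by
          apply List.append_cancel_left (as := a)
          rw [← hu'aσ, hpq, ← hc, List.append_assoc]
        have hydec : y = (rem y u ++ c) ++ (q ++ w) := by
          conv_lhs => rw [hys, ← hσ, hσcq]
          simp [List.append_assoc]
        refine yfLE_of_decomp hju hydec ?_
        rw [List.length_replicate, twos_append]
        have hσtwos : twos σ = twos c + twos q := by rw [hσcq, twos_append]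
        omega
    · -- u ≤ j
      refine yfLE_of_decomp hupqw hju ?_
      rw [twos_replicate]
    · -- v ≤ j
      have hjdec : repl k u = (List.replicate p.length YFDigit.two ++ q) ++ w := by
        rw [hju, List.append_assoc]
      refine yfLE_of_decomp hv hjdec ?_
      rw [twos_append, twos_replicate]
      omega

end YFWord

theorem yf_joinWord_least_upper_bound (u v : YFWord) :
    (∀ y : YFWord, yfLE u y → yfLE v y → yfLE (joinWord u v) y) ∧
    yfLE u (joinWord u v) ∧ yfLE v (joinWord u v) := by
  rw [joinWord]
  by_cases h : v.length ≤ u.length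
  · rw [if_pos h]
    exact main_lemma u v h
  · rw [if_neg h]
    obtain ⟨h1, h2, h3⟩ := main_lemma v u (le_of_not_ge h)
    exact ⟨fun y hu hv => h1 y hv hu, h3, h2⟩
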